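/- Let Δ be a group containing a free group G = ⟨a, b, c⟩ together with elements d_j (j ∈ ℤ) satisfying: b_i^{d_j} = b_i for i ≥ j, a^{d_j} = a^{b_j}, and b_i^{d_j} = b_i^{b_j} for i < j, where b_i = b^{c^i}. Then for every finitely supported f : ℤ → ℤ and every integer j, one has a_f^{d_j} = a_{f_j^+} and a_f^{d_j^{-1}} = a_{f_j^-}, where f_j^±(i) = f(i) for i ≠ j and f_j^±(j) = f(j) ± 1, and a_f = b_f^{-1} a b_f with b_f = ∏_i b_i^{f(i)} in increasing order of i. -/

import Mathlib

namespace Stmt19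

/-- The free group of rank 3 on `a`, `b`, `c`. -/
abbrev F := FreeGroup (Fin 3)

def a : F := FreeGroup.of 0
def b : F := FreeGroup.of 1
def c : F := FreeGroup.of 2

/-- `b_i = c^{-i} b c^i`. -/
def bi (i : ℤ) : F := c ^ (-i) * b * c ^ i

/-- `b_f`: the product of the `b_i^{f(i)}` in increasing order of `i`. -/
def bf (f : ℤ →₀ ℤ) : F := ((f.support.sort (· ≤ ·)).map fun i => bi i ^ f i).prod

/-- `a_f = b_f⁻¹ a b_f`. -/
def af (f : ℤ →₀ ℤ) : F := (bf f)⁻¹ * a * bf f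

def P (f : ℤ →₀ ℤ) (l : List ℤ) : F := (l.map fun i => bi i ^ f i).prod

lemma P_nil (f : ℤ →₀ ℤ) : P f [] = 1 := rfl

lemma P_cons (f : ℤ →₀ ℤ) (i : ℤ) (l : List ℤ) : P f (i :: l) = bi i ^ f i * P f l := by
  simp [P]

lemma P_append (f : ℤ →₀ ℤ) (l₁ l₂ : List ℤ) : P f (l₁ ++ l₂) = P f l₁ * P f l₂ := by
  simp [P]

lemma P_congr {f g : ℤ →₀ ℤ} {l : List ℤ} (h : ∀ i ∈ l, (f i : ℤ) = g i) :
    P f l = P g l := by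
  unfold P
  congr 1
  exact List.map_congr_left fun i hi => by rw [h i hi]

lemma P_filter (f : ℤ →₀ ℤ) (l : List ℤ) :
    P f (l.filter fun i => !decide ((f i : ℤ) = 0)) = P f l := by
  induction l with
  | nil => rfl
  | cons i l ih =>
    by_cases h : (f i : ℤ) = 0
    · simp [List.filter_cons, h, P_cons, ih]
    · simp [List.filter_cons, h, P_cons, ih]

lemma conj_zpow' (g x : F) (n : ℤ) : (g⁻¹ * x * g) ^ n = g⁻¹ * x ^ n * g := by
  have h : g⁻¹ * x * g = g⁻¹ * x * g⁻¹⁻¹ := by rw [inv_inv]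
  rw [h, conj_zpow, inv_inv]

lemma bf_eq_P (f : ℤ →₀ ℤ) (l : List ℤ) (hs : l.Pairwise (· ≤ ·)) (hn : l.Nodup)
    (hsupp : ∀ i, (f i : ℤ) ≠ 0 → i ∈ l) : bf f = P f l := by
  have h1 : l.filter (fun i => !decide ((f i : ℤ) = 0)) = f.support.sort (· ≤ ·) := by
    have hperm : List.Perm (l.filter (fun i => !decide ((f i : ℤ) = 0))) (f.support.sort (· ≤ ·)) := by
      rw [List.perm_ext_iff_of_nodup (hn.filter _) (f.support.sort_nodup _)]
      intro i
      simp only [List.mem_filter, Finset.mem_sort, Finsupp.mem_support_iff,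
        Bool.not_eq_true', decide_eq_false_iff_not]
      exact ⟨fun h => h.2, fun h => ⟨hsupp i h, h⟩⟩
    exact List.Perm.eq_of_pairwise' (hs.filter _) (Finset.pairwise_sort _ _) hperm
  have h2 : bf f = P f (f.support.sort (· ≤ ·)) := rfl
  rw [h2, ← h1, P_filter]


lemma key {Δ : Type*} [Group Δ] (ι : F →* Δ) (d : ℤ → Δ)
    (hfix : ∀ i j : ℤ, j ≤ i → (d j)⁻¹ * ι (bi i) * d j = ι (bi i))
    (ha : ∀ j : ℤ, (d j)⁻¹ * ι a * d j = ι ((bi j)⁻¹ * a * bi j))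
    (hlt : ∀ i j : ℤ, i < j → (d j)⁻¹ * ι (bi i) * d j = ι ((bi j)⁻¹ * bi i * bi j))
    (f : ℤ →₀ ℤ) (j : ℤ) :
    (d j)⁻¹ * ι (af f) * d j = ι (af (f + Finsupp.single j 1)) := by
  set f' := f + Finsupp.single j 1 with hf'
  have hf'app : ∀ i : ℤ, i ≠ j → (f' i : ℤ) = f i := by
    intro i hi
    simp [hf', Finsupp.single_apply, (Ne.symm hi : j ≠ i)]
  have hf'j : (f' j : ℤ) = f j + 1 := by simp [hf']
  set l₁ := (f.support.filter (· < j)).sort (· ≤ ·) with hl₁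
  set l₂ := (f.support.filter (j < ·)).sort (· ≤ ·) with hl₂
  set l := l₁ ++ j :: l₂ with hl
  have hm₁ : ∀ i ∈ l₁, i < j := by
    intro i hi
    rw [hl₁, Finset.mem_sort, Finset.mem_filter] at hi
    exact hi.2
  have hm₂ : ∀ i ∈ l₂, j < i := by
    intro i hi
    rw [hl₂, Finset.mem_sort, Finset.mem_filter] at hi
    exact hi.2
  have hsort : l.Pairwise (· ≤ ·) := by
    refine List.pairwise_append.mpr ⟨Finset.pairwise_sort _ _, ?_, ?_⟩
    · exact List.pairwise_cons.mpr ⟨fun i hi => (hm₂ i hi).le, Finset.pairwise_sort _ _⟩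
    · intro x hx y hy
      rcases List.mem_cons.mp hy with rfl | hy
      · exact (hm₁ x hx).le
      · exact (hm₁ x hx).le.trans (hm₂ y hy).le
  have hnodup : l.Nodup := by
    refine List.nodup_append'.mpr ⟨Finset.sort_nodup _ _, ?_, ?_⟩
    · exact List.nodup_cons.mpr ⟨fun h => lt_irrefl j (hm₂ j h), Finset.sort_nodup _ _⟩
    · intro x hx hx'
      rcases List.mem_cons.mp hx' with rfl | hx''
      · exact lt_irrefl x (hm₁ x hx)
      · exact lt_irrefl x ((hm₁ x hx).trans (hm₂ x hx''))
  have hmem : ∀ i, (f i : ℤ) ≠ 0 → i ∈ l := by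
    intro i hi
    have hs : i ∈ f.support := Finsupp.mem_support_iff.mpr hi
    rcases lt_trichotomy i j with h | h | h
    · exact List.mem_append.mpr (Or.inl (by
        rw [hl₁, Finset.mem_sort, Finset.mem_filter]; exact ⟨hs, h⟩))
    · exact List.mem_append.mpr (Or.inr (by rw [h]; exact List.mem_cons_self))
    · exact List.mem_append.mpr (Or.inr (List.mem_cons_of_mem _ (by
        rw [hl₂, Finset.mem_sort, Finset.mem_filter]; exact ⟨hs, h⟩)))
  have hmemj : j ∈ l := List.mem_append.mpr (Or.inr (List.mem_cons_self))
  have hmem' : ∀ i, (f' i : ℤ) ≠ 0 → i ∈ l := by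
    intro i hi
    by_cases h : i = j
    · rw [h]; exact hmemj
    · exact hmem i (by rwa [hf'app i h] at hi)
  have hbf : bf f = P f l₁ * (bi j ^ (f j : ℤ) * P f l₂) := by
    rw [bf_eq_P f l hsort hnodup hmem, P_append, P_cons]
  have hbf' : bf f' = P f l₁ * (bi j ^ ((f j : ℤ) + 1) * P f l₂) := by
    rw [bf_eq_P f' l hsort hnodup hmem', P_append, P_cons]
    rw [P_congr (fun i hi => hf'app i (hm₁ i hi).ne),
      P_congr (fun i hi => hf'app i (hm₂ i hi).ne'), hf'j]
  -- the conjugation homomorphism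
  set τ : F →* Δ := ((MulAut.conj (d j)⁻¹).toMonoidHom).comp ι with hτ
  have τ_apply : ∀ x : F, τ x = (d j)⁻¹ * ι x * d j := by
    intro x
    simp [hτ, MulAut.conj_apply]
  have hτ₂ : ∀ m : List ℤ, (∀ i ∈ m, j ≤ i) → τ (P f m) = ι (P f m) := by
    intro m hm
    induction m with
    | nil => simp [P_nil]
    | cons i t ih =>
      rw [P_cons, map_mul, map_mul, map_zpow, map_zpow,
        ih (fun x hx => hm x (List.mem_cons_of_mem _ hx))]
      congr 1
      rw [τ_apply, hfix i j (hm i (List.mem_cons_self))]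
  have hτ₁ : ∀ m : List ℤ, (∀ i ∈ m, i < j) → τ (P f m) = ι ((bi j)⁻¹ * P f m * bi j) := by
    intro m hm
    induction m with
    | nil => simp [P_nil]
    | cons i t ih =>
      rw [P_cons, map_mul, map_zpow, τ_apply (bi i),
        hlt i j (hm i (List.mem_cons_self)),
        ih (fun x hx => hm x (List.mem_cons_of_mem _ hx)),
        ← map_zpow, ← map_mul]
      congr 1
      rw [conj_zpow']
      group
  have hτbf : τ (bf f) = ι ((bi j)⁻¹ * bf f') := by
    have h2 : bi j ^ (f j : ℤ) * P f l₂ = P f (j :: l₂) := (P_cons _ _ _).symm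
    rw [hbf, map_mul, hτ₁ l₁ hm₁, h2, hτ₂ (j :: l₂)
      (fun i hi => by rcases List.mem_cons.mp hi with rfl | hi; exact le_refl i; exact (hm₂ i hi).le),
      ← map_mul]
    congr 1
    rw [hbf', P_cons]
    group
  have hτa : τ a = ι ((bi j)⁻¹ * a * bi j) := by rw [τ_apply]; exact ha j
  rw [← τ_apply]
  rw [af, map_mul, map_mul, map_inv, hτbf, hτa, ← map_inv, ← map_mul, ← map_mul]
  congr 1
  rw [af]
  group

/-- Let `Δ` be a group containing the free group `G = ⟨a, b, c⟩` (via an embedding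
`ι`) together with elements `d_j` (`j ∈ ℤ`) such that `b_i^{d_j} = b_i` for `i ≥ j`,
`a^{d_j} = a^{b_j}`, and `b_i^{d_j} = b_i^{b_j}` for `i < j`. Then for every finitely
supported `f : ℤ → ℤ` and every `j ∈ ℤ`, `a_f^{d_j} = a_{f_j⁺}` and
`a_f^{d_j⁻¹} = a_{f_j⁻}`, where `f_j^± = f ± single j 1`. -/
theorem conj_af_d {Δ : Type*} [Group Δ] (ι : F →* Δ) (hι : Function.Injective ι)
    (d : ℤ → Δ)
    (hfix : ∀ i j : ℤ, j ≤ i → (d j)⁻¹ * ι (bi i) * d j = ι (bi i))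
    (ha : ∀ j : ℤ, (d j)⁻¹ * ι a * d j = ι ((bi j)⁻¹ * a * bi j))
    (hlt : ∀ i j : ℤ, i < j → (d j)⁻¹ * ι (bi i) * d j = ι ((bi j)⁻¹ * bi i * bi j)) :
    ∀ (f : ℤ →₀ ℤ) (j : ℤ),
      (d j)⁻¹ * ι (af f) * d j = ι (af (f + Finsupp.single j 1)) ∧
      d j * ι (af f) * (d j)⁻¹ = ι (af (f - Finsupp.single j 1)) := by
  intro f j
  constructor
  · exact key ι d hfix ha hlt f j
  · have h := key ι d hfix ha hlt (f - Finsupp.single j 1) j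
    rw [sub_add_cancel] at h
    rw [← h]
    group


end Stmt19
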